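/- Let M be a Hausdorff, σ-compact, finite-dimensional smooth (C^∞) real manifold without boundary and let π : E → M be a smooth complex vector bundle of finite rank over M. Then for every point x ∈ M and every vector v in the fiber E_x there exists a smooth global section s of E with s(x) = v. (Condition (1) of complete localization for the module of global smooth sections, part of Theorem 15.2.) -/

import Mathlib

open Bundle
open scoped Manifold

/-- **Condition (1) of complete localization** (part of Theorem 15.2): for a smooth
complex vector bundle `E` of finite rank over a Hausdorff, σ-compact, finite-dimensional
smooth real manifold `B` without boundary, every vector `v` in any fiber `E x` is the
value at `x` of some smooth global section. -/
theorem smooth_section_through_any_fiber_vector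
    {m : ℕ} {B : Type*} [TopologicalSpace B]
    [ChartedSpace (EuclideanSpace ℝ (Fin m)) B]
    [IsManifold (𝓡 m) (⊤ : ℕ∞) B] [T2Space B] [SigmaCompactSpace B]
    (F : Type*) [NormedAddCommGroup F] [NormedSpace ℝ F] [NormedSpace ℂ F]
    [IsScalarTower ℝ ℂ F] [FiniteDimensional ℂ F]
    (E : B → Type*) [∀ x, AddCommGroup (E x)] [∀ x, Module ℝ (E x)] [∀ x, Module ℂ (E x)]
    [∀ x, TopologicalSpace (E x)] [TopologicalSpace (Bundle.TotalSpace F E)]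
    [FiberBundle F E] [VectorBundle ℝ F E] [VectorBundle ℂ F E]
    [ContMDiffVectorBundle (⊤ : ℕ∞) F E (𝓡 m)] :
    ∀ (x : B) (v : E x), ∃ s : ∀ y, E y,
      (ContMDiff (𝓡 m) ((𝓡 m).prod 𝓘(ℝ, F)) (⊤ : ℕ∞)
        fun y => Bundle.TotalSpace.mk' F y (s y)) ∧ s x = v := by
  intro x v
  have : LocallyCompactSpace B := ChartedSpace.locallyCompactSpace (EuclideanSpace ℝ (Fin m)) B
  have : NormalSpace B := inferInstance
  set e := trivializationAt F E x with he
  have hx : x ∈ e.baseSet := mem_baseSet_trivializationAt F E x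
  -- choose an open set `u` with `x ∈ u` and `closure u ⊆ e.baseSet`
  obtain ⟨u, u_op, hxu, hu⟩ := normal_exists_closure_subset (isClosed_singleton (x := x))
    e.open_baseSet (Set.singleton_subset_iff.2 hx)
  -- a smooth bump function
  obtain ⟨f, hf1, hf0, -⟩ := exists_contMDiffMap_one_nhds_of_subset_interior (𝓡 m) (n := (⊤ : ℕ∞))
    (s := {x}) (t := closure u) (isClosed_singleton)
    (Set.singleton_subset_iff.2 (mem_interior_iff_mem_nhds.2
      (Filter.mem_of_superset (u_op.mem_nhds (hxu rfl)) subset_closure)))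
  set w : F := (e ⟨x, v⟩).2 with hw
  refine ⟨fun y => f y • e.symm y w, ?_, ?_⟩
  · intro y₀
    by_cases hy₀ : y₀ ∈ e.baseSet
    · -- near `y₀`, the section is `e.symm (y, f y • w)`
      have hsm : ContMDiffAt (𝓡 m) ((𝓡 m).prod 𝓘(ℝ, F)) (⊤ : ℕ∞)
          (fun y => e.toOpenPartialHomeomorph.symm (y, f y • w)) y₀ := by
        refine (e.contMDiffOn_symm.contMDiffAt ?_).comp y₀ ?_
        · exact e.open_target.mem_nhds (by
            rw [e.mem_target]; exact hy₀)
        · exact contMDiffAt_id.prodMk ((f.contMDiff y₀).smul contMDiffAt_const)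
      have heq : (fun y => Bundle.TotalSpace.mk' F y (f y • e.symm y w)) =ᶠ[nhds y₀]
          (fun y => e.toOpenPartialHomeomorph.symm (y, f y • w)) := by
        filter_upwards [e.open_baseSet.mem_nhds hy₀] with y hy
        rw [← e.mk_symm hy]
        have : e.symm y (f y • w) = f y • e.symm y w :=
          (e.linearEquivAt ℝ y hy).symm.map_smul (f y) w
        rw [this]
      exact hsm.congr_of_eventuallyEq heq
    · -- `y₀` is away from the support of `f`, so the section is locally zero
      have hy₀' : y₀ ∉ closure u := fun h => hy₀ (hu h)
      have heq0 : (fun y => Bundle.TotalSpace.mk' F y (f y • e.symm y w)) =ᶠ[nhds y₀]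
          (Bundle.zeroSection F E) := by
        filter_upwards [isClosed_closure.isOpen_compl.mem_nhds hy₀'] with y hy
        rw [hf0 y hy, zero_smul]
        rfl
      exact ((Bundle.contMDiff_zeroSection ℝ E) y₀).congr_of_eventuallyEq heq0
  · have hfx : f x = 1 := hf1.self_of_nhdsSet x rfl
    show f x • e.symm x w = v
    rw [hfx, one_smul, hw, e.symm_apply_apply_mk hx]
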